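/- For every integer N ≥ 3, the N×N real symmetric matrix W_N = cos(π/N)·I_N + (1/2)(e_1 e_N^T + e_N e_1^T) − Σ_{i=1}^{N−1} (1/2)(e_i e_{i+1}^T + e_{i+1} e_i^T) is positive semidefinite, where e_i denotes the i-th standard basis vector. -/

import Mathlib

/-- The dual optimal matrix `W_N = cos(π/N)·I + (1/2)(e₁e_Nᵀ + e_N e₁ᵀ)
    − Σ_{i=1}^{N−1} (1/2)(e_i e_{i+1}ᵀ + e_{i+1} e_iᵀ)` (0-indexed). -/
noncomputable def Wmat (N : ℕ) : Matrix (Fin N) (Fin N) ℝ :=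
  Matrix.of fun i j =>
    (if i = j then Real.cos (Real.pi / N) else 0)
    + (if ((i : ℕ) = 0 ∧ (j : ℕ) = N - 1) ∨ ((i : ℕ) = N - 1 ∧ (j : ℕ) = 0)
        then (1 : ℝ) / 2 else 0)
    - (if (i : ℕ) + 1 = (j : ℕ) ∨ (j : ℕ) + 1 = (i : ℕ) then (1 : ℝ) / 2 else 0)

open Polynomial Polynomial.Chebyshev Matrix Pointwise

/-- signed cyclic shift -/
def Smat (N : ℕ) : Matrix (Fin N) (Fin N) ℝ :=
  Matrix.of fun i j =>
    if (j : ℕ) = (if (i : ℕ) = N - 1 then 0 else (i : ℕ) + 1)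
    then (if (i : ℕ) = N - 1 then -1 else 1) else 0

lemma Smat_apply_ne {N : ℕ} (i b : Fin N)
    (h : (b : ℕ) ≠ (if (i : ℕ) = N - 1 then 0 else (i : ℕ) + 1)) : Smat N i b = 0 :=
  if_neg h

lemma Smat_pow (N : ℕ) (hN : 3 ≤ N) : ∀ k, k ≤ N → ∀ i j : Fin N,
    ((Smat N) ^ k) i j =
      if (i : ℕ) + k < N then (if (j : ℕ) = (i : ℕ) + k then 1 else 0)
      else (if (j : ℕ) + N = (i : ℕ) + k then -1 else 0) := by
  intro k
  induction k with
  | zero =>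
    intro _ i j
    have : (i : ℕ) < N := i.isLt
    simp only [pow_zero, Matrix.one_apply, Nat.add_zero, if_pos this, Fin.ext_iff]
    split_ifs with h1 h2 h2 <;> (first | rfl | (exfalso; omega))
  | succ k ih =>
    intro hk i j
    have hk' : k ≤ N := by omega
    rw [pow_succ', Matrix.mul_apply]
    by_cases hi : (i : ℕ) = N - 1
    · have h0 : (0 : ℕ) < N := by omega
      rw [Finset.sum_eq_single (⟨0, h0⟩ : Fin N)]
      · have hS : Smat N i ⟨0, h0⟩ = -1 := by
          simp [Smat, hi]
        rw [hS, ih hk' ⟨0, h0⟩ j]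
        have h1 : ¬ ((i:ℕ) + (k+1) < N) := by omega
        rw [if_neg h1]
        have h2 : (0 : ℕ) + k < N := by omega
        simp only []
        rw [if_pos h2]
        split_ifs with h3 h4 h4 <;> (first | ring1 | (exfalso; omega))
      · intro b _ hb
        have hbv : (b : ℕ) ≠ 0 := by simpa [Fin.ext_iff] using hb
        rw [Smat_apply_ne i b (by rw [if_pos hi]; exact hbv), zero_mul]
      · intro h; exact absurd (Finset.mem_univ _) h
    · have hlt : (i : ℕ) + 1 < N := by have := i.isLt; omega
      rw [Finset.sum_eq_single (⟨(i:ℕ)+1, hlt⟩ : Fin N)]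
      · have hS : Smat N i ⟨(i:ℕ)+1, hlt⟩ = 1 := by
          simp [Smat, hi]
        rw [hS, one_mul, ih hk' ⟨(i:ℕ)+1, hlt⟩ j]
        simp only []
        have harith : (i : ℕ) + 1 + k = (i:ℕ) + (k+1) := by omega
        rw [harith]
      · intro b _ hb
        have hbv : (b : ℕ) ≠ (i:ℕ)+1 := by simpa [Fin.ext_iff] using hb
        rw [Smat_apply_ne i b (by rw [if_neg hi]; exact hbv), zero_mul]
      · intro h; exact absurd (Finset.mem_univ _) h

lemma Smat_pow_N (N : ℕ) (hN : 3 ≤ N) : (Smat N) ^ N = -1 := by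
  ext i j
  rw [Smat_pow N hN N le_rfl i j]
  have : ¬ ((i:ℕ) + N < N) := by omega
  rw [if_neg this]
  simp only [Matrix.neg_apply, Matrix.one_apply, Fin.ext_iff]
  split_ifs with h1 h2 h2 <;> (first | ring1 | (exfalso; omega))

lemma Smat_mul_transpose (N : ℕ) (hN : 3 ≤ N) : Smat N * (Smat N)ᵀ = 1 := by
  ext i j
  rw [Matrix.mul_apply]
  by_cases hij : i = j
  · subst hij
    simp only [Matrix.one_apply_eq]
    by_cases hi : (i : ℕ) = N - 1
    · have h0 : (0:ℕ) < N := by omega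
      rw [Finset.sum_eq_single (⟨0, h0⟩ : Fin N)]
      · simp [Smat, Matrix.transpose_apply, hi]
      · intro b _ hb
        have hbv : (b : ℕ) ≠ 0 := by simpa [Fin.ext_iff] using hb
        rw [Smat_apply_ne i b (by rw [if_pos hi]; exact hbv), zero_mul]
      · intro h; exact absurd (Finset.mem_univ _) h
    · have hlt : (i:ℕ)+1 < N := by have := i.isLt; omega
      rw [Finset.sum_eq_single (⟨(i:ℕ)+1, hlt⟩ : Fin N)]
      · simp [Smat, Matrix.transpose_apply, hi]
      · intro b _ hb
        have hbv : (b : ℕ) ≠ (i:ℕ)+1 := by simpa [Fin.ext_iff] using hb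
        rw [Smat_apply_ne i b (by rw [if_neg hi]; exact hbv), zero_mul]
      · intro h; exact absurd (Finset.mem_univ _) h
  · rw [Matrix.one_apply_ne hij]
    apply Finset.sum_eq_zero
    intro m _
    simp only [Smat, Matrix.transpose_apply, Matrix.of_apply]
    have hij' : (i:ℕ) ≠ (j:ℕ) := fun h => hij (Fin.ext h)
    have hiN := i.isLt; have hjN := j.isLt; have hmN := m.isLt
    split_ifs with h1 h2 h3 h4 <;> (first | ring1 | (exfalso; omega))

lemma Smat_transpose_mul (N : ℕ) (hN : 3 ≤ N) : (Smat N)ᵀ * Smat N = 1 :=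
  mul_eq_one_comm.mp (Smat_mul_transpose N hN)

lemma aeval_A_T (N : ℕ) (hN : 3 ≤ N) : ∀ n : ℕ,
    Polynomial.aeval ((1/2 : ℝ) • (Smat N + (Smat N)ᵀ)) (Polynomial.Chebyshev.T ℝ (n : ℤ)) =
      (1/2 : ℝ) • ((Smat N) ^ n + ((Smat N)ᵀ) ^ n)
  | 0 => by
    simp only [Nat.cast_zero, Polynomial.Chebyshev.T_zero, _root_.map_one, pow_zero]
    module
  | 1 => by
    simp only [Nat.cast_one, Polynomial.Chebyshev.T_one, Polynomial.aeval_X, pow_one]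
  | (n+2) => by
    have h1 := aeval_A_T N hN n
    have h2 := aeval_A_T N hN (n+1)
    rw [show ((n+1:ℕ):ℤ) = (n:ℤ)+1 from by push_cast; ring] at h2
    rw [show ((n+2:ℕ):ℤ) = (n:ℤ)+2 from by push_cast; ring,
      Polynomial.Chebyshev.T_add_two, map_sub, _root_.map_mul, _root_.map_mul, Polynomial.aeval_X, h1, h2]
    set S := Smat N
    have hST : S * Sᵀ = 1 := Smat_mul_transpose N hN
    have hTS : Sᵀ * S = 1 := Smat_transpose_mul N hN
    have e1 : S * (Sᵀ)^(n+1) = (Sᵀ)^n := by rw [pow_succ', ← mul_assoc, hST, one_mul]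
    have e2 : Sᵀ * S^(n+1) = S^n := by rw [pow_succ', ← mul_assoc, hTS, one_mul]
    have key : (S + Sᵀ) * (S^(n+1) + (Sᵀ)^(n+1))
        = (S^(n+2) + (Sᵀ)^(n+2)) + (S^n + (Sᵀ)^n) := by
      rw [add_mul, mul_add, mul_add, e1, e2, ← pow_succ', ← pow_succ']
      abel
    have h2' : (Polynomial.aeval ((1/2 : ℝ) • (S + Sᵀ)) (2 : Polynomial ℝ))
        = (2 : Matrix (Fin N) (Fin N) ℝ) := map_ofNat _ 2
    rw [h2']
    have htwo : (2 : Matrix (Fin N) (Fin N) ℝ) = (2:ℝ) • (1 : Matrix (Fin N) (Fin N) ℝ) := by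
      rw [_root_.two_smul ℝ (1 : Matrix (Fin N) (Fin N) ℝ)]
      exact one_add_one_eq_two.symm
    have hmain : ((2:ℝ) • (1 : Matrix (Fin N) (Fin N) ℝ)) * ((1/2:ℝ) • (S + Sᵀ))
        * ((1/2:ℝ) • (S^(n+1) + (Sᵀ)^(n+1)))
        = (1/2:ℝ) • ((S + Sᵀ) * (S^(n+1) + (Sᵀ)^(n+1))) := by
      rw [smul_mul_assoc, smul_mul_assoc, one_mul, smul_mul_assoc, mul_smul_comm,
        smul_smul, smul_smul]
      norm_num
    rw [htwo, hmain, key, smul_add]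
    abel

lemma aeval_A_T_N (N : ℕ) (hN : 3 ≤ N) :
    Polynomial.aeval ((1/2 : ℝ) • (Smat N + (Smat N)ᵀ)) (Polynomial.Chebyshev.T ℝ (N : ℤ))
      = (-1 : Matrix (Fin N) (Fin N) ℝ) := by
  rw [aeval_A_T N hN N, ← Matrix.transpose_pow, Smat_pow_N N hN, Matrix.transpose_neg,
    Matrix.transpose_one]
  module

lemma Wmat_eq (N : ℕ) (hN : 3 ≤ N) :
    Wmat N = Real.cos (Real.pi / N) • (1 : Matrix (Fin N) (Fin N) ℝ)
      - (1/2 : ℝ) • (Smat N + (Smat N)ᵀ) := by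
  ext i j
  have hiN := i.isLt; have hjN := j.isLt
  simp only [Wmat, Smat, Matrix.of_apply, Matrix.sub_apply, Matrix.smul_apply, Matrix.add_apply,
    Matrix.transpose_apply, Matrix.one_apply, smul_eq_mul, mul_ite, mul_one, mul_zero,
    Fin.ext_iff]
  split_ifs <;> (first | ring1 | (exfalso; omega))

lemma T_eval_one_le {x : ℝ} (hx : 1 ≤ x) : ∀ n : ℕ,
    1 ≤ (Polynomial.Chebyshev.T ℝ (n:ℤ)).eval x ∧
      (Polynomial.Chebyshev.T ℝ (n:ℤ)).eval x ≤ (Polynomial.Chebyshev.T ℝ ((n:ℤ)+1)).eval x := by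
  intro n
  induction n with
  | zero =>
    constructor
    · simp [Polynomial.Chebyshev.T_zero]
    · simp [Polynomial.Chebyshev.T_zero, Polynomial.Chebyshev.T_one]; exact hx
  | succ n ih =>
    obtain ⟨ha, hb⟩ := ih
    have hcast : ((n+1:ℕ):ℤ) = (n:ℤ)+1 := by push_cast; ring
    constructor
    · rw [hcast]; linarith
    · rw [hcast, show ((n:ℤ)+1)+1 = (n:ℤ)+2 from by ring, Polynomial.Chebyshev.T_add_two]
      simp only [Polynomial.eval_sub, Polynomial.eval_mul, Polynomial.eval_ofNat,
        Polynomial.eval_X]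
      nlinarith

lemma T_eval_ge_self {x : ℝ} (hx : 1 ≤ x) : ∀ n : ℕ, 1 ≤ n →
    x ≤ (Polynomial.Chebyshev.T ℝ (n:ℤ)).eval x := by
  intro n
  induction n with
  | zero => omega
  | succ n ih =>
    intro _
    rcases Nat.eq_zero_or_pos n with h | h
    · subst h; norm_num [Polynomial.Chebyshev.T_one]
    · have hn1 : 1 ≤ n := h
      have := (T_eval_one_le hx n).2
      have hcast : ((n+1:ℕ):ℤ) = (n:ℤ)+1 := by push_cast; ring
      rw [hcast]
      exact le_trans (ih hn1) this

lemma T_eval_neg' (x : ℝ) : ∀ n : ℕ,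
    (Polynomial.Chebyshev.T ℝ (n:ℤ)).eval (-x) = (-1)^n * (Polynomial.Chebyshev.T ℝ (n:ℤ)).eval x
  | 0 => by simp [Polynomial.Chebyshev.T_zero]
  | 1 => by simp [Polynomial.Chebyshev.T_one]
  | (n+2) => by
    have h1 := T_eval_neg' x n
    have h2 := T_eval_neg' x (n+1)
    rw [show ((n+1:ℕ):ℤ) = (n:ℤ)+1 from by push_cast; ring] at h2
    rw [show ((n+2:ℕ):ℤ) = (n:ℤ)+2 from by push_cast; ring, Polynomial.Chebyshev.T_add_two]
    simp only [Polynomial.eval_sub, Polynomial.eval_mul, Polynomial.eval_ofNat,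
      Polynomial.eval_X]
    rw [h1, h2]
    ring

lemma T_root_le {N : ℕ} (hN : 3 ≤ N) {x : ℝ}
    (hx : (Polynomial.Chebyshev.T ℝ (N:ℤ)).eval x = -1) : x ≤ Real.cos (Real.pi / N) := by
  have hNpos : (0:ℝ) < N := by exact_mod_cast (by omega : 0 < N)
  rcases le_or_gt x 1 with h1 | h1
  · rcases le_or_gt (-1) x with h2 | h2
    · -- x ∈ [-1, 1]
      have hcos : Real.cos (Real.arccos x) = x := Real.cos_arccos h2 h1
      have hT := Polynomial.Chebyshev.T_real_cos (Real.arccos x) (N:ℤ)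
      rw [hcos, hx] at hT
      obtain ⟨k, hk⟩ := Real.cos_eq_neg_one_iff.mp hT.symm
      push_cast at hk
      have hπ := Real.pi_pos
      have harc1 : Real.arccos x ≤ Real.pi := Real.arccos_le_pi x
      have harc0 : 0 ≤ Real.arccos x := Real.arccos_nonneg x
      have hge : Real.pi ≤ (N:ℝ) * Real.arccos x := by
        rcases le_or_gt 0 k with hk0 | hk0
        · have : (0:ℝ) ≤ (k:ℝ) := by exact_mod_cast hk0
          nlinarith
        · have : (k:ℝ) ≤ -1 := by exact_mod_cast (by omega : k ≤ -1)
          nlinarith [mul_nonneg (le_of_lt hNpos) harc0]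
      have harcge : Real.pi / N ≤ Real.arccos x := by
        rw [div_le_iff₀ hNpos]
        linarith [hge, mul_comm (N:ℝ) (Real.arccos x)]
      calc x = Real.cos (Real.arccos x) := hcos.symm
        _ ≤ Real.cos (Real.pi / N) :=
            Real.cos_le_cos_of_nonneg_of_le_pi (by positivity) harc1 harcge
    · -- x < -1
      exfalso
      have hy1 : 1 < -x := by linarith
      have h := T_eval_neg' (-x) N
      rw [neg_neg, hx] at h
      have hTy : -x ≤ (Polynomial.Chebyshev.T ℝ (N:ℤ)).eval (-x) :=
        T_eval_ge_self hy1.le N (by omega)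
      rcases Nat.even_or_odd N with he | ho
      · rw [he.neg_one_pow] at h
        linarith
      · rw [ho.neg_one_pow] at h
        linarith
  · -- x > 1
    exfalso
    have := (T_eval_one_le h1.le N).1
    linarith

theorem Wmat_posSemidef (N : ℕ) (hN : 3 ≤ N) : (Wmat N).PosSemidef := by
  haveI : NeZero N := ⟨by omega⟩
  have hWeq : Wmat N = Real.cos (Real.pi / N) • (1 : Matrix (Fin N) (Fin N) ℝ)
      - (1/2 : ℝ) • (Smat N + (Smat N)ᵀ) := Wmat_eq N hN
  have hherm : (Wmat N).IsHermitian := by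
    rw [Matrix.IsHermitian, hWeq, Matrix.conjTranspose_eq_transpose_of_trivial,
      Matrix.transpose_sub, Matrix.transpose_smul, Matrix.transpose_one,
      Matrix.transpose_smul, Matrix.transpose_add, Matrix.transpose_transpose,
      add_comm ((Smat N)ᵀ) (Smat N)]
  apply hherm.posSemidef_iff_eigenvalues_nonneg.mpr
  intro k
  have hmem : hherm.eigenvalues k ∈ spectrum ℝ (Wmat N) :=
    hherm.eigenvalues_mem_spectrum_real k
  have hWeq' : Wmat N = algebraMap ℝ (Matrix (Fin N) (Fin N) ℝ) (Real.cos (Real.pi / N))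
      - (1/2 : ℝ) • (Smat N + (Smat N)ᵀ) := by
    rw [hWeq, Algebra.algebraMap_eq_smul_one]
  have hspec : spectrum ℝ (Wmat N)
      = ({Real.cos (Real.pi / N)} : Set ℝ) - spectrum ℝ ((1/2 : ℝ) • (Smat N + (Smat N)ᵀ)) := by
    rw [hWeq']
    exact (spectrum.singleton_sub_eq _ _).symm
  rw [hspec] at hmem
  obtain ⟨c', hc', ν, hν, hsum⟩ := Set.mem_sub.mp hmem
  rw [Set.mem_singleton_iff] at hc'
  subst hc'
  have hTν : (Polynomial.Chebyshev.T ℝ (N:ℤ)).eval ν = -1 := by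
    have hmapped := spectrum.subset_polynomial_aeval ((1/2 : ℝ) • (Smat N + (Smat N)ᵀ))
      (Polynomial.Chebyshev.T ℝ (N:ℤ)) ⟨ν, hν, rfl⟩
    rw [aeval_A_T_N N hN] at hmapped
    have hneg : (-1 : Matrix (Fin N) (Fin N) ℝ) = algebraMap ℝ (Matrix (Fin N) (Fin N) ℝ) (-1) := by
      simp
    rw [hneg, spectrum.scalar_eq] at hmapped
    exact hmapped
  have hle : ν ≤ Real.cos (Real.pi / N) := T_root_le hN hTν
  rw [← hsum]
  simp only [Pi.zero_apply]
  linarith
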